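/- Let σ̄ > 0 and let u : (0,1) × (0,∞) → ℝ be such that at every point (t,s) the partial derivatives ∂_t u(t,s), ∂_s u(t,s) and ∂_{ss} u(t,s) exist, s²∂_{ss}u(t,s) < 1, and u satisfies the equation ∂_t u(t,s) + (σ̄²/2) · s²∂_{ss}u(t,s) / (1 − s²∂_{ss}u(t,s)) = 0. Define v(t,s) := (−u(t,s) − log s + σ̄² t/2)/σ̄. Then for every (t,s) ∈ (0,1) × (0,∞): s²∂_{ss}v(t,s) = (1 − s²∂_{ss}u(t,s))/σ̄ > 0, and v satisfies ∂_t v(t,s) − 1/(2 s² ∂_{ss}v(t,s)) = 0. -/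

import Mathlib

open Set

/-- Let `σ̄ > 0` and let `u` on `(0,1) × (0,∞)` have partial derivatives `∂ₜu`, `∂ₛu`,
`∂ₛₛu` with `s²∂ₛₛu < 1`, satisfying `∂ₜu + (σ̄²/2)·s²∂ₛₛu/(1 − s²∂ₛₛu) = 0`.
Define `v(t,s) = (−u(t,s) − log s + σ̄²t/2)/σ̄`. Then `v` has partial derivatives
`∂ₜv`, `∂ₛv`, `∂ₛₛv` with `s²∂ₛₛv = (1 − s²∂ₛₛu)/σ̄ > 0`, and `∂ₜv − 1/(2s²∂ₛₛv) = 0`. -/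
theorem stmt11 (σb : ℝ) (hσb : 0 < σb)
    (u ut us uss : ℝ → ℝ → ℝ)
    (hut : ∀ t ∈ Set.Ioo (0:ℝ) 1, ∀ s ∈ Set.Ioi (0:ℝ),
      HasDerivAt (fun τ => u τ s) (ut t s) t)
    (hus : ∀ t ∈ Set.Ioo (0:ℝ) 1, ∀ s ∈ Set.Ioi (0:ℝ),
      HasDerivAt (fun σ' => u t σ') (us t s) s)
    (huss : ∀ t ∈ Set.Ioo (0:ℝ) 1, ∀ s ∈ Set.Ioi (0:ℝ),
      HasDerivAt (fun σ' => us t σ') (uss t s) s)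
    (hlt : ∀ t ∈ Set.Ioo (0:ℝ) 1, ∀ s ∈ Set.Ioi (0:ℝ), s ^ 2 * uss t s < 1)
    (hpde : ∀ t ∈ Set.Ioo (0:ℝ) 1, ∀ s ∈ Set.Ioi (0:ℝ),
      ut t s + σb ^ 2 / 2 * (s ^ 2 * uss t s) / (1 - s ^ 2 * uss t s) = 0)
    (v : ℝ → ℝ → ℝ)
    (hv : ∀ t s, v t s = (-u t s - Real.log s + σb ^ 2 * t / 2) / σb) :
    ∃ vt vs vss : ℝ → ℝ → ℝ,
      ∀ t ∈ Set.Ioo (0:ℝ) 1, ∀ s ∈ Set.Ioi (0:ℝ),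
        HasDerivAt (fun τ => v τ s) (vt t s) t ∧
        HasDerivAt (fun σ' => v t σ') (vs t s) s ∧
        HasDerivAt (fun σ' => vs t σ') (vss t s) s ∧
        s ^ 2 * vss t s = (1 - s ^ 2 * uss t s) / σb ∧
        0 < s ^ 2 * vss t s ∧
        vt t s - 1 / (2 * (s ^ 2 * vss t s)) = 0 := by
  refine ⟨fun t s => (-ut t s + σb ^ 2 / 2) / σb,
    fun t s => (-us t s - 1 / s) / σb,
    fun t s => (-uss t s + 1 / s ^ 2) / σb, ?_⟩
  intro t ht s hs
  have hs0 : (0:ℝ) < s := hs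
  have hσ0 : σb ≠ 0 := ne_of_gt hσb
  have hX := hlt t ht s hs
  have h1X : (0:ℝ) < 1 - s ^ 2 * uss t s := by linarith
  have hvtderiv : HasDerivAt (fun τ => v τ s) ((-ut t s + σb ^ 2 / 2) / σb) t := by
    have : HasDerivAt (fun τ => (-u τ s - Real.log s + σb ^ 2 * τ / 2) / σb)
        ((-ut t s + σb ^ 2 / 2) / σb) t := by
      have h1 : HasDerivAt (fun τ => -u τ s - Real.log s + σb ^ 2 * τ / 2)
          (-ut t s + σb ^ 2 / 2) t := by
        have := ((hut t ht s hs).neg.sub_const (Real.log s)).add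
          (((hasDerivAt_id t).const_mul (σb ^ 2)).div_const 2)
        exact this.congr_deriv (by ring)
      exact h1.div_const σb
    exact this.congr_of_eventuallyEq (Filter.Eventually.of_forall fun τ => hv τ s)
  have hvsderiv : HasDerivAt (fun σ' => v t σ') ((-us t s - 1 / s) / σb) s := by
    have h1 : HasDerivAt (fun σ' => -u t σ' - Real.log σ' + σb ^ 2 * t / 2)
        (-us t s - 1 / s) s := by
      simpa [one_div] using (((hus t ht s hs).neg.sub (Real.hasDerivAt_log (ne_of_gt hs0))).add_const (σb ^ 2 * t / 2))
    have h2 := h1.div_const σb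
    exact h2.congr_of_eventuallyEq (Filter.Eventually.of_forall fun σ' => hv t σ')
  have hvssderiv : HasDerivAt (fun σ' => (-us t σ' - 1 / σ') / σb)
      ((-uss t s + 1 / s ^ 2) / σb) s := by
    have hinv : HasDerivAt (fun σ' : ℝ => 1 / σ') (-(1 / s ^ 2)) s := by
      simpa [one_div] using (hasDerivAt_inv (ne_of_gt hs0))
    have h1 : HasDerivAt (fun σ' => -us t σ' - 1 / σ') (-uss t s + 1 / s ^ 2) s := by
      exact ((huss t ht s hs).neg.sub hinv).congr_deriv (by ring)
    exact h1.div_const σb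
  refine ⟨hvtderiv, hvsderiv, hvssderiv, ?_, ?_, ?_⟩
  · field_simp
    ring
  · have : s ^ 2 * ((-uss t s + 1 / s ^ 2) / σb) = (1 - s ^ 2 * uss t s) / σb := by
      field_simp; ring
    rw [this]
    positivity
  · have hpde' := hpde t ht s hs
    have hX2 : s ^ 2 * ((-uss t s + 1 / s ^ 2) / σb) = (1 - s ^ 2 * uss t s) / σb := by
      field_simp; ring
    rw [hX2]
    have hutval : ut t s = -(σb ^ 2 / 2 * (s ^ 2 * uss t s) / (1 - s ^ 2 * uss t s)) := by
      linarith
    show (-ut t s + σb ^ 2 / 2) / σb - 1 / (2 * ((1 - s ^ 2 * uss t s) / σb)) = 0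
    rw [hutval]
    field_simp
    ring
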